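/- Let d, q be positive integers, let D be a real d × q matrix and let ρ > 0 be such that (DᵀD)² = ρ·(DᵀD). Then for every τ > 0 and every ν ∈ ℝ^d, the matrix DᵀD + τI is invertible and ‖(DᵀD + τI)⁻¹Dᵀν‖₂ = ‖Dᵀν‖₂/(ρ + τ). -/

import Mathlib

/-- Euclidean (ℓ₂) norm of a finitely indexed real vector. -/
noncomputable def l2norm {ι : Type*} [Fintype ι] (v : ι → ℝ) : ℝ :=
  Real.sqrt (∑ i, (v i) ^ 2)

lemma l2norm_smul {ι : Type*} [Fintype ι] (c : ℝ) (hc : 0 ≤ c) (v : ι → ℝ) :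
    l2norm (c • v) = c * l2norm v := by
  unfold l2norm
  have : ∑ i, (c • v) i ^ 2 = c ^ 2 * ∑ i, (v i) ^ 2 := by
    rw [Finset.mul_sum]; congr 1; funext i; simp [mul_pow]
  rw [this, Real.sqrt_mul (by positivity), Real.sqrt_sq hc]

lemma tmul_zero {m n : ℕ} (A : Matrix (Fin m) (Fin n) ℝ)
    (h : A.transpose * A = 0) : A = 0 := by
  have hct : A.conjTranspose = A.transpose := by
    ext i j; simp [Matrix.conjTranspose]
  exact Matrix.conjTranspose_mul_self_eq_zero.mp (by rw [hct]; exact h)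

lemma sq_of_cube {n : ℕ} (N : Matrix (Fin n) (Fin n) ℝ) (ρ : ℝ)
    (hsymm : N.transpose = N) (h3 : N * N * N = ρ • (N * N)) :
    N * N = ρ • N := by
  have e1 : N * N * (N * N) = ρ • ρ • (N * N) := by
    rw [← Matrix.mul_assoc, h3, Matrix.smul_mul, h3]
  have e2 : N * N * (ρ • N) = ρ • ρ • (N * N) := by
    rw [Matrix.mul_smul, h3]
  have e3 : (ρ • N) * (N * N) = ρ • ρ • (N * N) := by
    rw [Matrix.smul_mul, ← Matrix.mul_assoc, h3]
  have e4 : (ρ • N) * (ρ • N) = ρ • ρ • (N * N) := by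
    rw [Matrix.smul_mul, Matrix.mul_smul, smul_comm]
  have hz : (N * N - ρ • N).transpose * (N * N - ρ • N) = 0 := by
    rw [Matrix.transpose_sub, Matrix.transpose_mul, Matrix.transpose_smul, hsymm,
      Matrix.sub_mul, Matrix.mul_sub, Matrix.mul_sub, e1, e2, e3, e4]
    abel
  exact sub_eq_zero.mp (tmul_zero _ hz)

lemma aux_key {d q : ℕ} (D : Matrix (Fin d) (Fin q) ℝ) (ρ : ℝ)
    (hDD : (D.transpose * D) * (D.transpose * D) = ρ • (D.transpose * D)) :
    (D.transpose * D) * D.transpose = ρ • D.transpose := by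
  have hN3 : (D * D.transpose) * (D * D.transpose) * (D * D.transpose)
      = ρ • ((D * D.transpose) * (D * D.transpose)) := by
    have h1 : (D * D.transpose) * (D * D.transpose) * (D * D.transpose)
        = D * ((D.transpose * D) * (D.transpose * D)) * D.transpose := by
      simp only [Matrix.mul_assoc]
    rw [h1, hDD, Matrix.mul_smul, Matrix.smul_mul]
    simp only [Matrix.mul_assoc]
  have hsymm : (D * D.transpose).transpose = D * D.transpose := by
    simp [Matrix.transpose_mul]
  have hN2 : (D * D.transpose) * (D * D.transpose) = ρ • (D * D.transpose) :=
    sq_of_cube _ _ hsymm hN3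
  have hDADt : D * (D.transpose * D) * D.transpose
      = (D * D.transpose) * (D * D.transpose) := by
    simp only [Matrix.mul_assoc]
  have e1 : (D * (D.transpose * D)) * ((D.transpose * D) * D.transpose)
      = ρ • ρ • (D * D.transpose) := by
    have h1 : (D * (D.transpose * D)) * ((D.transpose * D) * D.transpose)
        = D * ((D.transpose * D) * (D.transpose * D)) * D.transpose := by
      simp only [Matrix.mul_assoc]
    rw [h1, hDD, Matrix.mul_smul, Matrix.smul_mul, hDADt, hN2]
  have e2 : (D * (D.transpose * D)) * (ρ • D.transpose)
      = ρ • ρ • (D * D.transpose) := by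
    rw [Matrix.mul_smul, hDADt, hN2, smul_comm]
  have e3 : (ρ • D) * ((D.transpose * D) * D.transpose)
      = ρ • ρ • (D * D.transpose) := by
    rw [Matrix.smul_mul, ← Matrix.mul_assoc, hDADt, hN2]
  have e4 : (ρ • D) * (ρ • D.transpose) = ρ • ρ • (D * D.transpose) := by
    rw [Matrix.smul_mul, Matrix.mul_smul]
  have hz : ((D.transpose * D) * D.transpose - ρ • D.transpose).transpose *
      ((D.transpose * D) * D.transpose - ρ • D.transpose) = 0 := by
    rw [Matrix.transpose_sub, Matrix.transpose_mul, Matrix.transpose_smul,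
      Matrix.transpose_transpose, Matrix.transpose_mul, Matrix.transpose_transpose,
      Matrix.sub_mul, Matrix.mul_sub, Matrix.mul_sub, e1, e2, e3, e4]
    abel
  exact sub_eq_zero.mp (tmul_zero _ hz)

/-- If `(DᵀD)² = ρ·(DᵀD)` with `ρ > 0`, then for every `τ > 0` the matrix
`DᵀD + τI` is invertible and `‖(DᵀD + τI)⁻¹Dᵀν‖₂ = ‖Dᵀν‖₂/(ρ + τ)`. -/
theorem ridge_inverse_norm
    (d q : ℕ) (hd : 0 < d) (hq : 0 < q)
    (D : Matrix (Fin d) (Fin q) ℝ) (ρ : ℝ) (hρ : 0 < ρ)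
    (hDD : (D.transpose * D) * (D.transpose * D) = ρ • (D.transpose * D)) :
    ∀ τ : ℝ, 0 < τ → ∀ ν : Fin d → ℝ,
      IsUnit (D.transpose * D + τ • (1 : Matrix (Fin q) (Fin q) ℝ)) ∧
      l2norm ((D.transpose * D + τ • (1 : Matrix (Fin q) (Fin q) ℝ))⁻¹.mulVec
          (D.transpose.mulVec ν))
        = l2norm (D.transpose.mulVec ν) / (ρ + τ) := by
  intro τ hτ ν
  have hρτ : (0:ℝ) < ρ + τ := by linarith
  have hτ0 : τ ≠ 0 := ne_of_gt hτ
  have hρτ0 : ρ + τ ≠ 0 := ne_of_gt hρτ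
  have hmul : (D.transpose * D + τ • (1 : Matrix (Fin q) (Fin q) ℝ)) *
      ((1/τ) • (1 : Matrix (Fin q) (Fin q) ℝ)
        - (1/(τ*(ρ+τ))) • (D.transpose * D)) = 1 := by
    rw [Matrix.mul_sub, Matrix.add_mul, Matrix.add_mul]
    simp only [Matrix.mul_smul, Matrix.smul_mul, Matrix.mul_one, Matrix.one_mul,
      smul_smul, hDD]
    have hc : (1/(τ*(ρ+τ)) * ρ) + (1/(τ*(ρ+τ)) * τ) = 1/τ := by field_simp
    rw [← add_smul, hc]
    rw [one_div, inv_mul_cancel₀ hτ0, one_smul, add_sub_cancel_left]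
  have hunit : IsUnit (D.transpose * D + τ • (1 : Matrix (Fin q) (Fin q) ℝ)) := by
    have := invertibleOfRightInverse _ _ hmul
    exact isUnit_of_invertible _
  refine ⟨hunit, ?_⟩
  have hinv : (D.transpose * D + τ • (1 : Matrix (Fin q) (Fin q) ℝ))⁻¹
      = (1/τ) • (1 : Matrix (Fin q) (Fin q) ℝ)
        - (1/(τ*(ρ+τ))) • (D.transpose * D) :=
    Matrix.inv_eq_right_inv hmul
  have hkey := aux_key D ρ hDD
  have hAw : (D.transpose * D).mulVec (D.transpose.mulVec ν)
      = ρ • D.transpose.mulVec ν := by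
    rw [Matrix.mulVec_mulVec, hkey, Matrix.smul_mulVec]
  have hBw : ((1/τ) • (1 : Matrix (Fin q) (Fin q) ℝ)
        - (1/(τ*(ρ+τ))) • (D.transpose * D)).mulVec (D.transpose.mulVec ν)
      = ((ρ+τ)⁻¹) • D.transpose.mulVec ν := by
    rw [Matrix.sub_mulVec, Matrix.smul_mulVec, Matrix.smul_mulVec,
      Matrix.one_mulVec, hAw, smul_smul]
    funext i
    simp only [Pi.sub_apply, Pi.smul_apply, smul_eq_mul]
    field_simp
    ring
  rw [hinv, hBw, l2norm_smul _ (by positivity), div_eq_inv_mul]
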